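/- arXiv:2007.06633 — 4 statements merged into one kernel-verified Lean document; each statement's English description precedes it below -/
import Mathlib

section
/- Let N ∈ ℕ, let a ≤ b and c ≤ d be real numbers, let f : [a,b] → ℝ^N be continuous, and let φ : [c,d] → [a,b] be continuously differentiable, strictly increasing, with φ(c) = a and φ(d) = b. Then for every multi-index I = (i_1,…,i_m), ∫_{c ≤ t_1 ≤ ⋯ ≤ t_m ≤ d} ∏_{j=1}^m f_{i_j}(φ(t_j)) φ'(t_j) dt_1⋯dt_m = ∫_{a ≤ s_1 ≤ ⋯ ≤ s_m ≤ b} ∏_{j=1}^m f_{i_j}(s_j) ds_1⋯ds_m. (Reparametrization invariance of the path signature: S(γ∘φ) = S(γ), expressed in terms of the derivative f = γ'.) -/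
open MeasureTheory

/-- The simplex `{t : 0 ≤ t 0 ≤ t 1 ≤ ⋯ ≤ t (m-1) ≤ 1}` of nondecreasing
`m`-tuples with entries in `[a,b]`. -/
def simplex (m : ℕ) (a b : ℝ) : Set (Fin m → ℝ) :=
  {t | (∀ j, t j ∈ Set.Icc a b) ∧ ∀ j k : Fin m, j ≤ k → t j ≤ t k}

lemma isClosed_simplex (m : ℕ) (a b : ℝ) : IsClosed (simplex m a b) := by
  have h1 : IsClosed {t : Fin m → ℝ | ∀ j, t j ∈ Set.Icc a b} := by
    have : {t : Fin m → ℝ | ∀ j, t j ∈ Set.Icc a b} =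
        ⋂ j, (fun t : Fin m → ℝ => t j) ⁻¹' Set.Icc a b := by
      ext t; simp
    rw [this]
    exact isClosed_iInter fun j => isClosed_Icc.preimage (continuous_apply j)
  have h2 : IsClosed {t : Fin m → ℝ | ∀ j k : Fin m, j ≤ k → t j ≤ t k} := by
    have : {t : Fin m → ℝ | ∀ j k : Fin m, j ≤ k → t j ≤ t k} =
        ⋂ j, ⋂ k, ⋂ (_ : j ≤ k), {t : Fin m → ℝ | t j ≤ t k} := by
      ext t; simp [Set.mem_iInter]
    rw [this]
    exact isClosed_iInter fun j => isClosed_iInter fun k => isClosed_iInter fun _ =>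
      isClosed_le (continuous_apply j) (continuous_apply k)
  exact h1.inter h2

/-- The derivative of a strictly monotone function on `[c,d]` (with `c < d`) is
nonnegative, including one-sided derivatives at the endpoints. -/
lemma deriv_nonneg_of_strictMonoOn {c d : ℝ} (hcd : c < d) {φ : ℝ → ℝ} {y : ℝ}
    {t : ℝ} (ht : t ∈ Set.Icc c d)
    (hder : HasDerivWithinAt φ y (Set.Icc c d) t)
    (hmono : StrictMonoOn φ (Set.Icc c d)) : 0 ≤ y := by
  have hslope := hasDerivWithinAt_iff_tendsto_slope.mp hder
  rcases lt_or_eq_of_le ht.2 with htd | htd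
  · -- t < d : use the filter from the right
    have hsub : Set.Ioc t d ⊆ Set.Icc c d \ {t} := by
      intro s hs
      exact ⟨⟨le_trans ht.1 hs.1.le, hs.2⟩, ne_of_gt hs.1⟩
    have h2 : Filter.Tendsto (slope φ t) (nhdsWithin t (Set.Ioc t d)) (nhds y) :=
      hslope.mono_left (nhdsWithin_mono t hsub)
    have hne : (nhdsWithin t (Set.Ioc t d)).NeBot := by
      rw [nhdsWithin_Ioc_eq_nhdsGT htd]
      infer_instance
    refine ge_of_tendsto h2 ?_
    filter_upwards [self_mem_nhdsWithin] with s hs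
    have h1 : φ t < φ s := hmono ht ⟨le_trans ht.1 hs.1.le, hs.2⟩ hs.1
    have h2 : (0:ℝ) < s - t := sub_pos.mpr hs.1
    rw [slope_def_field]
    exact le_of_lt (div_pos (sub_pos.mpr h1) h2)
  · -- t = d : use the filter from the left
    subst htd
    have hsub : Set.Ico c t ⊆ Set.Icc c t \ {t} := by
      intro s hs
      exact ⟨⟨hs.1, hs.2.le⟩, ne_of_lt hs.2⟩
    have hct : c < t := hcd
    have h2 : Filter.Tendsto (slope φ t) (nhdsWithin t (Set.Ico c t)) (nhds y) := by
      refine hslope.mono_left (nhdsWithin_mono t ?_)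
      intro s hs
      exact ⟨⟨hs.1, hs.2.le⟩, ne_of_lt hs.2⟩
    have hne : (nhdsWithin t (Set.Ico c t)).NeBot := by
      rw [nhdsWithin_Ico_eq_nhdsLT hct]
      infer_instance
    refine ge_of_tendsto h2 ?_
    filter_upwards [self_mem_nhdsWithin] with s hs
    have h1 : φ s < φ t := hmono ⟨hs.1, hs.2.le⟩ ht hs.2
    have h2 : s - t < 0 := sub_neg.mpr hs.2
    rw [slope_def_field]
    exact le_of_lt (div_pos_of_neg_of_neg (sub_neg.mpr h1) h2)

/-- **Reparametrization invariance of the path signature.**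
If `f : [a,b] → ℝ^N` is continuous and `φ : [c,d] → [a,b]` is a strictly increasing
continuously differentiable surjection, then for every multi-index `I`,
the iterated integral of `∏ f_{I j}(φ(t_j)) φ'(t_j)` over the simplex in `[c,d]`
equals the iterated integral of `∏ f_{I j}(s_j)` over the simplex in `[a,b]`. -/
theorem signature_reparametrization_invariance
    (N : ℕ) (a b c d : ℝ) (hab : a ≤ b) (hcd : c ≤ d)
    (f : ℝ → Fin N → ℝ) (hf : ContinuousOn f (Set.Icc a b))
    (φ φ' : ℝ → ℝ)
    (hφ : ∀ t ∈ Set.Icc c d, HasDerivWithinAt φ (φ' t) (Set.Icc c d) t)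
    (hφ' : ContinuousOn φ' (Set.Icc c d))
    (hmono : StrictMonoOn φ (Set.Icc c d))
    (hc : φ c = a) (hd : φ d = b)
    (m : ℕ) (I : Fin m → Fin N) :
    (∫ t in simplex m c d, ∏ j, (f (φ (t j)) (I j) * φ' (t j))) =
      ∫ s in simplex m a b, ∏ j, f (s j) (I j) := by
  rcases Nat.eq_zero_or_pos m with rfl | hm
  · -- m = 0 : both simplices are `univ` and the integrands are 1
    have h1 : simplex 0 c d = Set.univ := by
      ext t; simp [simplex]
    have h2 : simplex 0 a b = Set.univ := by
      ext t; simp [simplex]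
    simp [h1, h2]
  rcases eq_or_lt_of_le hcd with rfl | hcd'
  · -- degenerate case c = d : both simplices have measure zero
    have hab' : a = b := by rw [← hc, ← hd]
    subst hab'
    have hz : ∀ x : ℝ, (volume (simplex m x x) : ENNReal) = 0 := by
      intro x
      have hsub : simplex m x x ⊆ Set.pi Set.univ (fun _ : Fin m => ({x} : Set ℝ)) := by
        intro t ht
        intro j _
        have := ht.1 j
        simp only [Set.mem_Icc] at this
        simp [le_antisymm this.2 this.1]
      refine measure_mono_null hsub ?_
      rw [volume_pi_pi]
      simp only [Real.volume_singleton, Finset.prod_const, Finset.card_univ,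
        Fintype.card_fin]
      exact zero_pow hm.ne'
    rw [Measure.restrict_eq_zero.mpr (hz c), Measure.restrict_eq_zero.mpr (hz a),
      integral_zero_measure, integral_zero_measure]
  -- main case: c < d
  set Φ : (Fin m → ℝ) → (Fin m → ℝ) := fun t j => φ (t j) with hΦ
  set L : (Fin m → ℝ) → ((Fin m → ℝ) →L[ℝ] (Fin m → ℝ)) :=
    fun t => ContinuousLinearMap.pi (fun j => φ' (t j) • ContinuousLinearMap.proj j) with hL
  have hmeas : MeasurableSet (simplex m c d) := (isClosed_simplex m c d).measurableSet
  have hmemIcc : ∀ t ∈ simplex m c d, ∀ j, t j ∈ Set.Icc c d := fun t ht j => ht.1 j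
  -- the derivative of Φ
  have hder : ∀ t ∈ simplex m c d, HasFDerivWithinAt Φ (L t) (simplex m c d) t := by
    intro t ht
    apply hasFDerivWithinAt_pi''
    intro j
    rw [ContinuousLinearMap.proj_pi]
    exact HasDerivWithinAt.comp_hasFDerivWithinAt t (hφ (t j) (ht.1 j))
      ((ContinuousLinearMap.proj j : (Fin m → ℝ) →L[ℝ] ℝ).hasFDerivWithinAt)
      (fun s hs => hs.1 j)
  -- injectivity of Φ on the simplex
  have hinj : Set.InjOn Φ (simplex m c d) := by
    intro s hs t ht hst
    funext j
    exact hmono.injOn (hs.1 j) (ht.1 j) (congrFun hst j)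
  -- Φ maps the simplex in [c,d] onto the simplex in [a,b]
  have hφcont : ContinuousOn φ (Set.Icc c d) :=
    fun t ht => (hφ t ht).continuousWithinAt
  have himage : Φ '' (simplex m c d) = simplex m a b := by
    apply Set.Subset.antisymm
    · rintro _ ⟨t, ht, rfl⟩
      constructor
      · intro j
        constructor
        · rw [← hc]
          exact hmono.monotoneOn (Set.left_mem_Icc.mpr hcd) (ht.1 j) (ht.1 j).1
        · rw [← hd]
          exact hmono.monotoneOn (ht.1 j) (Set.right_mem_Icc.mpr hcd) (ht.1 j).2
      · intro j k hjk
        exact hmono.monotoneOn (ht.1 j) (ht.1 k) (ht.2 j k hjk)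
    · intro s hs
      have hsurj : Set.Icc a b ⊆ φ '' Set.Icc c d := by
        rw [← hc, ← hd]
        exact intermediate_value_Icc hcd hφcont
      have hex : ∀ j, ∃ u ∈ Set.Icc c d, φ u = s j := by
        intro j
        obtain ⟨u, hu, hu2⟩ := hsurj (hs.1 j)
        exact ⟨u, hu, hu2⟩
      choose t htIcc htφ using hex
      refine ⟨t, ⟨htIcc, ?_⟩, funext htφ⟩
      intro j k hjk
      rw [← hmono.le_iff_le (htIcc j) (htIcc k), htφ j, htφ k]
      exact hs.2 j k hjk
  -- the determinant of L t
  have hdet : ∀ t : Fin m → ℝ, (L t).det = ∏ j, φ' (t j) := by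
    intro t
    have : (L t : (Fin m → ℝ) →ₗ[ℝ] (Fin m → ℝ)) =
        Matrix.toLin' (Matrix.diagonal fun j => φ' (t j)) := by
      apply LinearMap.ext
      intro v
      funext j
      simp [hL, Matrix.toLin'_apply, Matrix.mulVec_diagonal, mul_comm]
    rw [ContinuousLinearMap.det, this, LinearMap.det_toLin', Matrix.det_diagonal]
  -- apply the change of variables formula
  rw [← himage,
    integral_image_eq_integral_abs_det_fderiv_smul volume hmeas hder hinj
      (fun s => ∏ j, f (s j) (I j))]
  refine setIntegral_congr_fun hmeas ?_
  intro t ht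
  show (∏ j, (f (φ (t j)) (I j) * φ' (t j))) = |(L t).det| • ∏ j, f (Φ t j) (I j)
  have hnn : ∀ j : Fin m, 0 ≤ φ' (t j) := fun j =>
    deriv_nonneg_of_strictMonoOn hcd' (ht.1 j) (hφ (t j) (ht.1 j)) hmono
  rw [hdet, abs_of_nonneg (Finset.prod_nonneg fun j _ => hnn j), smul_eq_mul,
    ← Finset.prod_mul_distrib]
  exact Finset.prod_congr rfl fun j _ => mul_comm _ _
end

section
/- Let N ∈ ℕ, let f : [0,1] → ℝ^N be continuous, and let I = (i_1,…,i_k) and J = (j_1,…,j_l) be multi-indices of lengths k and l. Set R = (r_1,…,r_{k+l}) = (i_1,…,i_k,j_1,…,j_l). Then S^I(f) · S^J(f) = Σ_{σ ∈ Sh(k,l)} S^{(r_{σ(1)},…,r_{σ(k+l)})}(f), where Sh(k,l) is the set of (k,l)-shuffles, i.e. permutations σ of {1,…,k+l} such that σ^{-1}(1) < σ^{-1}(2) < ⋯ < σ^{-1}(k) and σ^{-1}(k+1) < σ^{-1}(k+2) < ⋯ < σ^{-1}(k+l). (Shuffle product identity for the path signature.) -/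
open MeasureTheory

/-- The signature coefficient of `f : [0,1] → ℝ^N` with respect to a multi-index. -/
noncomputable def sig {N : ℕ} (f : ℝ → Fin N → ℝ) {m : ℕ} (I : Fin m → Fin N) : ℝ :=
  ∫ t in simplex m 0 1, ∏ j, f (t j) (I j)

/-- The set of `(k,l)`-shuffles: permutations `σ` of `Fin (k+l)` whose inverse is
increasing on the first `k` indices and on the last `l` indices. -/
noncomputable def shuffles (k l : ℕ) : Finset (Equiv.Perm (Fin (k + l))) :=
  open scoped Classical in
  Finset.univ.filter (fun σ =>
    (∀ p q : Fin (k + l), (p : ℕ) < k → (q : ℕ) < k → p < q → σ⁻¹ p < σ⁻¹ q) ∧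
    (∀ p q : Fin (k + l), k ≤ (p : ℕ) → k ≤ (q : ℕ) → p < q → σ⁻¹ p < σ⁻¹ q))

lemma mem_shuffles {k l : ℕ} {σ : Equiv.Perm (Fin (k + l))} :
    σ ∈ shuffles k l ↔
      (∀ p q : Fin (k + l), (p : ℕ) < k → (q : ℕ) < k → p < q → σ⁻¹ p < σ⁻¹ q) ∧
      (∀ p q : Fin (k + l), k ≤ (p : ℕ) → k ≤ (q : ℕ) → p < q → σ⁻¹ p < σ⁻¹ q) := by
  classical
  simp [shuffles]

lemma measurableSet_simplex (m : ℕ) (a b : ℝ) : MeasurableSet (simplex m a b) := by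
  have h : simplex m a b =
      (⋂ j, {t : Fin m → ℝ | t j ∈ Set.Icc a b}) ∩
        ⋂ (j) (k') (_ : j ≤ k'), {t : Fin m → ℝ | t j ≤ t k'} := by
    ext t
    simp [simplex]
  rw [h]
  exact (MeasurableSet.iInter fun j => (measurable_pi_apply j) measurableSet_Icc).inter
      (MeasurableSet.iInter fun j => MeasurableSet.iInter fun k' => MeasurableSet.iInter fun _ =>
        measurableSet_le (measurable_pi_apply j) (measurable_pi_apply k'))

/-- The coordinate-splitting measurable equivalence attached to a permutation. -/
noncomputable def shufPhi (k l : ℕ) (σ : Equiv.Perm (Fin (k + l))) :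
    (Fin (k + l) → ℝ) ≃ᵐ (Fin k → ℝ) × (Fin l → ℝ) :=
  ((MeasurableEquiv.piCongrLeft (fun _ => ℝ)
      (finSumFinEquiv.trans (σ⁻¹ : Equiv.Perm (Fin (k + l))))).symm).trans
    (MeasurableEquiv.sumPiEquivProdPi (fun _ : Fin k ⊕ Fin l => ℝ))

lemma shufPhi_apply (k l : ℕ) (σ : Equiv.Perm (Fin (k + l))) (u : Fin (k + l) → ℝ) :
    shufPhi k l σ u =
      (fun a => u (σ⁻¹ (Fin.castAdd l a)), fun b => u (σ⁻¹ (Fin.natAdd k b))) := by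
  simp only [shufPhi, MeasurableEquiv.trans_apply,
    MeasurableEquiv.piCongrLeft, MeasurableEquiv.symm, MeasurableEquiv.sumPiEquivProdPi,
    MeasurableEquiv.coe_mk, Equiv.piCongrLeft, Equiv.sumPiEquivProdPi, Equiv.symm_symm,
    Equiv.piCongrLeft', Equiv.coe_fn_mk, Equiv.coe_fn_symm_mk]
  ext x <;> simp

lemma shufPhi_measurePreserving (k l : ℕ) (σ : Equiv.Perm (Fin (k + l))) :
    MeasurePreserving (shufPhi k l σ) volume volume :=
  (volume_measurePreserving_sumPiEquivProdPi _).comp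
    ((volume_measurePreserving_piCongrLeft (fun _ => ℝ) _).symm _)

lemma append_shufPhi {k l : ℕ} (σ : Equiv.Perm (Fin (k + l))) (u : Fin (k + l) → ℝ) :
    Fin.append (shufPhi k l σ u).1 (shufPhi k l σ u).2 = fun q => u (σ⁻¹ q) := by
  rw [shufPhi_apply]
  funext q
  exact Fin.addCases (fun a => Fin.append_left _ _ a) (fun b => Fin.append_right _ _ b) q

/-- Stability of `Tuple.sort` : within a weakly increasing block, the inverse of the
sorting permutation is strictly increasing. -/
lemma sort_block {n : ℕ} (w : Fin n → ℝ) (p q : Fin n) (hpq : p < q) (hw : w p ≤ w q) :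
    (Tuple.sort w)⁻¹ p < (Tuple.sort w)⁻¹ q := by
  set σ := Tuple.sort w with hσ
  by_contra hcon
  push_neg at hcon
  have hne : σ⁻¹ q ≠ σ⁻¹ p := fun h => hpq.ne' (σ⁻¹.injective h)
  have hlt : σ⁻¹ q < σ⁻¹ p := hcon.lt_of_ne hne
  have h1 : w q ≤ w p := by
    have := Tuple.monotone_sort w hlt.le
    simpa [← hσ, Function.comp] using this
  have heq : w (σ (σ⁻¹ q)) = w (σ (σ⁻¹ p)) := by
    simp [le_antisymm h1 hw]
  have := ((Tuple.eq_sort_iff (f := w) (σ := σ)).mp hσ).2 _ _ hlt heq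
  simp only [Equiv.Perm.coe_inv, Equiv.apply_symm_apply] at this
  exact absurd hpq (not_lt.mpr this.le)

lemma sort_unique {n : ℕ} (w : Fin n → ℝ) (hw : Function.Injective w)
    (σ : Equiv.Perm (Fin n)) (hm : Monotone (w ∘ σ)) : σ = Tuple.sort w :=
  Tuple.eq_sort_iff.mpr ⟨hm, fun i j hij heq => absurd (σ.injective (hw heq)) hij.ne⟩

lemma null_noninj (n : ℕ) :
    volume {u : Fin n → ℝ | ¬ Function.Injective u} = 0 := by
  have hB : {u : Fin n → ℝ | ¬ Function.Injective u} =
      ⋃ (p : Fin n) (q : Fin n) (_ : p ≠ q), {u : Fin n → ℝ | u p = u q} := by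
    ext u
    simp only [Set.mem_setOf_eq, Function.not_injective_iff, Set.mem_iUnion]
    tauto
  rw [hB]
  refine measure_iUnion_null fun p => measure_iUnion_null fun q => measure_iUnion_null fun h => ?_
  have : {u : Fin n → ℝ | u p = u q} =
      ↑(LinearMap.ker (((LinearMap.proj p : (Fin n → ℝ) →ₗ[ℝ] ℝ) -
        (LinearMap.proj q : (Fin n → ℝ) →ₗ[ℝ] ℝ)))) := by
    ext u; simp [LinearMap.mem_ker, sub_eq_zero]
  rw [this]
  apply Measure.addHaar_submodule
  intro htop
  have h2 : Pi.single p (1:ℝ) ∈ LinearMap.ker (((LinearMap.proj p : (Fin n → ℝ) →ₗ[ℝ] ℝ) -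
      (LinearMap.proj q : (Fin n → ℝ) →ₗ[ℝ] ℝ))) := htop ▸ Submodule.mem_top
  simp [LinearMap.mem_ker, Pi.single_apply, h, Ne.symm h, sub_eq_zero] at h2

lemma measurableSet_noninj (n : ℕ) :
    MeasurableSet {u : Fin n → ℝ | ¬ Function.Injective u} := by
  have hB : {u : Fin n → ℝ | ¬ Function.Injective u} =
      ⋃ (p : Fin n) (q : Fin n) (_ : p ≠ q), {u : Fin n → ℝ | u p = u q} := by
    ext u
    simp only [Set.mem_setOf_eq, Function.not_injective_iff, Set.mem_iUnion]
    tauto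
  rw [hB]
  exact MeasurableSet.iUnion fun p => MeasurableSet.iUnion fun q => MeasurableSet.iUnion fun _ =>
    measurableSet_eq_fun (measurable_pi_apply p) (measurable_pi_apply q)


lemma shuffles_cover (k l : ℕ) (s : Fin k → ℝ) (t : Fin l → ℝ)
    (hs : s ∈ simplex k 0 1) (ht : t ∈ simplex l 0 1) :
    ∃ σ ∈ shuffles k l, ∃ u ∈ simplex (k + l) 0 1, shufPhi k l σ u = (s, t) := by
  obtain ⟨w, hw⟩ : ∃ w, w = Fin.append s t := ⟨_, rfl⟩
  obtain ⟨σ, hσ⟩ : ∃ σ, σ = Tuple.sort w := ⟨_, rfl⟩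
  have hmono : Monotone (w ∘ σ) := hσ ▸ Tuple.monotone_sort w
  have hwmem : ∀ q, w q ∈ Set.Icc (0:ℝ) 1 := by
    intro q
    refine Fin.addCases (fun a => ?_) (fun b => ?_) q
    · rw [hw, Fin.append_left]; exact hs.1 a
    · rw [hw, Fin.append_right]; exact ht.1 b
  have hσsh : σ ∈ shuffles k l := by
    rw [mem_shuffles]
    constructor
    · intro p q hp hq hpq
      rw [hσ]
      refine sort_block w p q hpq ?_
      have key : ∀ a : Fin k, w (Fin.castAdd l a) = s a := fun a => by
        rw [hw]; exact Fin.append_left _ _ _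
      have hp2 : w p = s ⟨(p : ℕ), hp⟩ := (congrArg w (Fin.ext (by simp))).trans (key _)
      have hq2 : w q = s ⟨(q : ℕ), hq⟩ := (congrArg w (Fin.ext (by simp))).trans (key _)
      rw [hp2, hq2]
      exact hs.2 _ _ (Fin.mk_le_mk.mpr (Fin.le_def.mp hpq.le))
    · intro p q hp hq hpq
      rw [hσ]
      refine sort_block w p q hpq ?_
      have key : ∀ b : Fin l, w (Fin.natAdd k b) = t b := fun b => by
        rw [hw]; exact Fin.append_right _ _ _
      have hp2 : w p = t ⟨(p : ℕ) - k, by omega⟩ :=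
        (congrArg w (Fin.ext (by simp; omega))).trans (key _)
      have hq2 : w q = t ⟨(q : ℕ) - k, by omega⟩ :=
        (congrArg w (Fin.ext (by simp; omega))).trans (key _)
      rw [hp2, hq2]
      refine ht.2 _ _ ?_
      rw [Fin.le_def]
      simp only
      have := Fin.lt_def.mp hpq
      omega
  refine ⟨σ, hσsh, w ∘ σ, ⟨fun j => hwmem _, fun j j' h => hmono h⟩, ?_⟩
  rw [shufPhi_apply]
  have hback : ∀ q, (w ∘ σ) (σ⁻¹ q) = w q := fun q => by
    simp [Function.comp_apply]
  refine Prod.ext ?_ ?_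
  · funext x
    show (w ∘ σ) (σ⁻¹ (Fin.castAdd l x)) = s x
    rw [hback, hw, Fin.append_left]
  · funext x
    show (w ∘ σ) (σ⁻¹ (Fin.natAdd k x)) = t x
    rw [hback, hw, Fin.append_right]

lemma shuffles_disjoint_core {k l : ℕ} {σ τ : Equiv.Perm (Fin (k + l))}
    {u v : Fin (k + l) → ℝ} (hu : u ∈ simplex (k + l) 0 1) (hv : v ∈ simplex (k + l) 0 1)
    {z : (Fin k → ℝ) × (Fin l → ℝ)} (hw : Function.Injective (Fin.append z.1 z.2))
    (huz : shufPhi k l σ u = z) (hvz : shufPhi k l τ v = z) : σ = τ := by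
  have h1 : Fin.append z.1 z.2 = fun q => u (σ⁻¹ q) := by rw [← huz]; exact append_shufPhi σ u
  have h2 : Fin.append z.1 z.2 = fun q => v (τ⁻¹ q) := by rw [← hvz]; exact append_shufPhi τ v
  have hm1 : Monotone (Fin.append z.1 z.2 ∘ σ) := by
    have he : (Fin.append z.1 z.2) ∘ σ = u := by
      funext p
      show (Fin.append z.1 z.2) (σ p) = u p
      rw [h1]
      simp
    rw [he]
    exact fun i j hij => hu.2 i j hij
  have hm2 : Monotone (Fin.append z.1 z.2 ∘ τ) := by
    have he : (Fin.append z.1 z.2) ∘ τ = v := by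
      funext p
      show (Fin.append z.1 z.2) (τ p) = v p
      rw [h2]
      simp
    rw [he]
    exact fun i j hij => hv.2 i j hij
  rw [sort_unique _ hw σ hm1, sort_unique _ hw τ hm2]

/-- **Shuffle product identity for the path signature:**
`S^I(f) · S^J(f) = Σ_{σ ∈ Sh(k,l)} S^{(r_{σ(1)}, …, r_{σ(k+l)})}(f)` where
`R = (r_1, …, r_{k+l})` is the concatenation of `I` and `J`. -/
theorem signature_shuffle_product (N k l : ℕ) (f : ℝ → Fin N → ℝ)
    (hf : ContinuousOn f (Set.Icc 0 1))
    (I : Fin k → Fin N) (J : Fin l → Fin N) :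
    sig f I * sig f J =
      ∑ σ ∈ shuffles k l, sig f (fun p => Fin.append I J (σ p)) := by
  classical
  set Sk := simplex k 0 1 with hSkdef
  set Sl := simplex l 0 1 with hSldef
  set g : (Fin k → ℝ) × (Fin l → ℝ) → ℝ :=
    fun z => (∏ a, f (z.1 a) (I a)) * (∏ b, f (z.2 b) (J b)) with hgdef
  -- continuity of the coordinate products
  have hcontI : ∀ {m : ℕ} (K : Fin m → Fin N),
      ContinuousOn (fun t : Fin m → ℝ => ∏ j, f (t j) (K j))
        (Set.pi Set.univ fun _ => Set.Icc (0:ℝ) 1) := by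
    intro m K
    apply continuousOn_finset_prod
    intro j _
    exact (((continuous_apply (K j)).comp_continuousOn hf).comp
      (continuous_apply j).continuousOn (fun t ht => ht j (Set.mem_univ j)))
  have hSsub : ∀ {m : ℕ}, simplex m 0 1 ⊆ Set.pi Set.univ fun _ => Set.Icc (0:ℝ) 1 :=
    fun {m} t ht j _ => ht.1 j
  have hBox : IntegrableOn g ((Set.pi Set.univ fun _ : Fin k => Set.Icc (0:ℝ) 1) ×ˢ
      (Set.pi Set.univ fun _ : Fin l => Set.Icc (0:ℝ) 1)) := by
    apply ContinuousOn.integrableOn_compact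
    · exact (isCompact_univ_pi fun _ => isCompact_Icc).prod
        (isCompact_univ_pi fun _ => isCompact_Icc)
    · exact ((hcontI I).comp continuous_fst.continuousOn fun z hz => hz.1).mul
        ((hcontI J).comp continuous_snd.continuousOn fun z hz => hz.2)
  have hprodsub : Sk ×ˢ Sl ⊆ (Set.pi Set.univ fun _ : Fin k => Set.Icc (0:ℝ) 1) ×ˢ
      (Set.pi Set.univ fun _ : Fin l => Set.Icc (0:ℝ) 1) :=
    Set.prod_mono hSsub hSsub
  -- step 1 : the product of signatures as an integral over the product of simplices
  have h1 : sig f I * sig f J = ∫ z in Sk ×ˢ Sl, g z := by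
    rw [sig, sig, ← setIntegral_prod_mul]
    rfl
  -- the pieces
  set E : Equiv.Perm (Fin (k + l)) → Set ((Fin k → ℝ) × (Fin l → ℝ)) :=
    fun σ => shufPhi k l σ '' simplex (k + l) 0 1 with hEdef
  have hEmeas : ∀ σ, MeasurableSet (E σ) := fun σ =>
    (MeasurableEquiv.measurableSet_image _).2 (measurableSet_simplex _ 0 1)
  have hEsub : ∀ σ ∈ shuffles k l, E σ ⊆ Sk ×ˢ Sl := by
    intro σ hσ z hz
    obtain ⟨u, hu, rfl⟩ := hz
    rw [mem_shuffles] at hσ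
    rw [shufPhi_apply]
    constructor
    · refine ⟨fun a => hu.1 _, fun a a' haa' => ?_⟩
      rcases eq_or_lt_of_le haa' with h | h
      · rw [h]
      · refine hu.2 _ _ (hσ.1 (Fin.castAdd l a) (Fin.castAdd l a')
          (by rw [Fin.coe_castAdd]; exact a.isLt) (by rw [Fin.coe_castAdd]; exact a'.isLt)
          ?_).le
        rw [Fin.lt_def, Fin.coe_castAdd, Fin.coe_castAdd]
        exact h
    · refine ⟨fun b => hu.1 _, fun b b' hbb' => ?_⟩
      rcases eq_or_lt_of_le hbb' with h | h
      · rw [h]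
      · refine hu.2 _ _ (hσ.2 (Fin.natAdd k b) (Fin.natAdd k b')
          (by rw [Fin.coe_natAdd]; exact Nat.le_add_right _ _)
          (by rw [Fin.coe_natAdd]; exact Nat.le_add_right _ _) ?_).le
        rw [Fin.lt_def, Fin.coe_natAdd, Fin.coe_natAdd]
        exact Nat.add_lt_add_left h k
  -- each piece integrates to the shuffled signature
  have hEint : ∀ σ ∈ shuffles k l, ∫ z in E σ, g z =
      sig f (fun p => Fin.append I J (σ p)) := by
    intro σ hσ
    rw [hEdef]
    rw [(shufPhi_measurePreserving k l σ).setIntegral_image_emb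
      (shufPhi k l σ).measurableEmbedding g _]
    rw [sig]
    refine setIntegral_congr_fun (measurableSet_simplex _ 0 1) fun u hu => ?_
    rw [hgdef]
    simp only [shufPhi_apply]
    rw [show (∏ p, f (u p) (Fin.append I J (σ p))) =
        ∏ q, f (u (σ⁻¹ q)) (Fin.append I J q) from by
      rw [← Equiv.prod_comp σ (fun q => f (u (σ⁻¹ q)) (Fin.append I J q))]
      exact Finset.prod_congr rfl fun p _ => by simp]
    rw [Fin.prod_univ_add (f := fun q => f (u (σ⁻¹ q)) (Fin.append I J q))]
    simp [Fin.append_left, Fin.append_right]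
  -- covering
  have hcover : Sk ×ˢ Sl ⊆ ⋃ σ ∈ shuffles k l, E σ := by
    rintro ⟨s, t⟩ hz
    obtain ⟨σ, hσ, u, hu, huz⟩ := shuffles_cover k l s t hz.1 hz.2
    exact Set.mem_biUnion hσ ⟨u, hu, huz⟩
  -- the null overlap set
  set D : Set ((Fin k → ℝ) × (Fin l → ℝ)) :=
    (shufPhi k l 1).symm ⁻¹' {u : Fin (k + l) → ℝ | ¬ Function.Injective u} with hDdef
  have hDmeas : MeasurableSet D :=
    (shufPhi k l 1).symm.measurable (measurableSet_noninj (k + l))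
  have hDnull : volume D = 0 := by
    rw [hDdef, ((shufPhi_measurePreserving k l 1).symm _).measure_preimage
      (measurableSet_noninj (k + l)).nullMeasurableSet]
    exact null_noninj (k + l)
  have hDiff : ∀ z : (Fin k → ℝ) × (Fin l → ℝ), z ∉ D →
      Function.Injective (Fin.append z.1 z.2) := by
    intro z hz
    have h0 : Fin.append z.1 z.2 = (shufPhi k l 1).symm z := by
      have := append_shufPhi (1 : Equiv.Perm (Fin (k + l))) ((shufPhi k l 1).symm z)
      rw [MeasurableEquiv.apply_symm_apply] at this
      rw [this]
      funext q; simp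
    rw [h0]
    exact not_not.mp (by simpa [hDdef] using hz)
  -- pairwise disjointness away from D
  have hdisj : (↑(shuffles k l) : Set (Equiv.Perm (Fin (k + l)))).Pairwise
      (Function.onFun Disjoint fun σ => E σ \ D) := by
    intro σ _ τ _ hne
    simp only [Function.onFun]
    rw [Set.disjoint_left]
    rintro z ⟨hzσ, hzD⟩ ⟨hzτ, _⟩
    apply hne
    obtain ⟨u, hu, huz⟩ := hzσ
    obtain ⟨v, hv, hvz⟩ := hzτ
    exact shuffles_disjoint_core hu hv (hDiff z hzD) huz hvz
  -- assemble
  have hunion : (⋃ σ ∈ shuffles k l, (E σ \ D)) = Sk ×ˢ Sl \ D := by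
    apply Set.Subset.antisymm
    · intro z hz
      obtain ⟨σ, hσ, hzσ, hz2⟩ := Set.mem_iUnion₂.mp hz
      exact ⟨hEsub σ hσ hzσ, hz2⟩
    · rintro z ⟨hz1, hz2⟩
      obtain ⟨σ, hσ, hzσ⟩ := Set.mem_iUnion₂.mp (hcover hz1)
      exact Set.mem_iUnion₂.mpr ⟨σ, hσ, hzσ, hz2⟩
  have hae : ∀ s : Set ((Fin k → ℝ) × (Fin l → ℝ)), (s \ D : Set _) =ᵐ[volume] s :=
    fun s => diff_ae_eq_self.mpr (measure_mono_null Set.inter_subset_right hDnull)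
  rw [h1, ← setIntegral_congr_set (hae (Sk ×ˢ Sl)), ← hunion,
    integral_biUnion_finset (shuffles k l) (fun σ _ => (hEmeas σ).diff hDmeas) hdisj
      (fun σ hσ => (hBox.mono_set ((Set.diff_subset.trans (hEsub σ hσ)).trans hprodsub)))]
  refine Finset.sum_congr rfl fun σ hσ => ?_
  rw [setIntegral_congr_set (hae (E σ)), hEint σ hσ]
end

section
/- Let N, T, M ∈ ℕ with M ≥ 1 and let a, b : {1,…,T} → ℝ^N. Define Q̂_0(s,t) := 1 for all 0 ≤ s,t ≤ T, and recursively for 1 ≤ m ≤ M: Q̂_m(s,t) := 1 + Σ_{s'=1}^{s} Σ_{t'=1}^{t} Q̂_{m-1}(s'-1, t'-1) ⟨a(s'), b(t')⟩. Then Q̂_M(T,T) = Σ_{m=0}^{M} Σ_{|I|=m} Ŝ^I(a) Ŝ^I(b), the discrete signature kernel truncated at level M. (Horner-type recursion for efficient computation of the discrete signature kernel, requiring O(T²·M) operations.) -/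
/-- The discrete signature coefficient of `a : {1,…,T} → ℝ^N` (a discrete
derivative, indexed here by `a 1, …, a T`) with respect to a multi-index
`I = (i_1,…,i_m)`: the sum of `a(t_1)_{i_1} ⋯ a(t_m)_{i_m}` over all strictly
increasing tuples `1 ≤ t_1 < ⋯ < t_m ≤ T`; for the empty multi-index it is `1`. -/
noncomputable def hatS {N : ℕ} (T : ℕ) (a : ℕ → Fin N → ℝ) {m : ℕ}
    (I : Fin m → Fin N) : ℝ :=
  open scoped Classical in
  ∑ t ∈ Finset.univ.filter (fun t : Fin m → Fin T => StrictMono t),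
    ∏ j, a ((t j : ℕ) + 1) (I j)

/-- The Horner-type recursion for the discrete signature kernel:
`Q̂_0(s,t) = 1` and
`Q̂_m(s,t) = 1 + Σ_{s'=1}^s Σ_{t'=1}^t Q̂_{m-1}(s'-1,t'-1) ⟨a(s'), b(t')⟩`. -/
noncomputable def Qhat {N : ℕ} (a b : ℕ → Fin N → ℝ) : ℕ → ℕ → ℕ → ℝ
  | 0, _, _ => 1
  | m + 1, s, t =>
      1 + ∑ s' ∈ Finset.Icc 1 s, ∑ t' ∈ Finset.Icc 1 t,
            Qhat a b m (s' - 1) (t' - 1) * ∑ c, a s' c * b t' c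

lemma hatS_empty {N : ℕ} (T : ℕ) (a : ℕ → Fin N → ℝ) (I : Fin 0 → Fin N) :
    hatS T a I = 1 := by
  classical
  rw [hatS]
  rw [Finset.filter_true_of_mem (fun t _ => Subsingleton.strictMono t)]
  simp

lemma hatS_bot {N : ℕ} (a : ℕ → Fin N → ℝ) {m : ℕ} (I : Fin (m + 1) → Fin N) :
    hatS 0 a I = 0 := by
  classical
  rw [hatS]
  simp [Finset.univ_eq_empty]

lemma hatS_succ_top {N : ℕ} (s : ℕ) (a : ℕ → Fin N → ℝ) {m : ℕ}
    (I : Fin (m + 1) → Fin N) :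
    hatS (s + 1) a I =
      hatS s a I + hatS s a (fun j => I j.castSucc) * a (s + 1) (I (Fin.last m)) := by
  classical
  rw [hatS, hatS, hatS, Finset.sum_mul]
  rw [← Finset.sum_filter_add_sum_filter_not
        (Finset.univ.filter fun t : Fin (m + 1) → Fin (s + 1) => StrictMono t)
        (fun t => t (Fin.last m) = Fin.last s)]
  rw [add_comm]
  congr 1
  · -- tuples avoiding the top value `last s`
    refine Finset.sum_bij' (i := fun t ht => fun j => (t j).castLT ?_)
      (j := fun t ht => fun j => (t j).castSucc) ?_ ?_ ?_ ?_ ?_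
    · -- bound: t j < s
      simp only [Finset.mem_filter, Finset.mem_univ, true_and] at ht
      obtain ⟨hmono, hne⟩ := ht
      have h1 : t j ≤ t (Fin.last m) := hmono.monotone (Fin.le_last j)
      have h2 : t (Fin.last m) < Fin.last s := Fin.lt_last_iff_ne_last.2 hne
      exact lt_of_le_of_lt h1 h2
    · intro t ht
      simp only [Finset.mem_filter, Finset.mem_univ, true_and] at ht ⊢
      intro j k hjk
      exact Fin.lt_def.mpr (Fin.lt_def.mp (ht.1 hjk))
    · intro t ht
      simp only [Finset.mem_filter, Finset.mem_univ, true_and] at ht ⊢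
      constructor
      · intro j k hjk
        exact Fin.castSucc_lt_castSucc_iff.2 (ht hjk)
      · intro h
        have := congrArg Fin.val h
        simp only [Fin.coe_castSucc, Fin.val_last] at this
        exact absurd this (Nat.ne_of_lt (t (Fin.last m)).isLt)
    · intro t ht; funext j; ext; rfl
    · intro t ht; funext j; ext; rfl
    · intro t ht; apply Finset.prod_congr rfl; intro j _; rfl
  · -- tuples hitting the top value `last s`
    refine Finset.sum_bij' (i := fun t ht => fun j => (t j.castSucc).castLT ?_)
      (j := fun t ht => Fin.snoc (fun j => (t j).castSucc) (Fin.last s)) ?_ ?_ ?_ ?_ ?_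
    · -- bound
      simp only [Finset.mem_filter, Finset.mem_univ, true_and] at ht
      obtain ⟨hmono, heq⟩ := ht
      have h1 : t j.castSucc < t (Fin.last m) := hmono (Fin.castSucc_lt_last j)
      rw [heq] at h1
      simpa [Fin.lt_def] using h1
    · intro t ht
      simp only [Finset.mem_filter, Finset.mem_univ, true_and] at ht ⊢
      intro j k hjk
      exact Fin.lt_def.mpr (Fin.lt_def.mp (ht.1 (Fin.castSucc_lt_castSucc_iff.2 hjk)))
    · intro t ht
      simp only [Finset.mem_filter, Finset.mem_univ, true_and] at ht ⊢
      constructor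
      · intro j k hjk
        rcases Fin.eq_castSucc_or_eq_last k with ⟨k', rfl⟩ | rfl
        · rcases Fin.eq_castSucc_or_eq_last j with ⟨j', rfl⟩ | rfl
          · simp only [Fin.snoc_castSucc]
            exact Fin.castSucc_lt_castSucc_iff.2 (ht (Fin.castSucc_lt_castSucc_iff.1 hjk))
          · exact absurd hjk (not_lt.2 (Fin.le_last _))
        · rcases Fin.eq_castSucc_or_eq_last j with ⟨j', rfl⟩ | rfl
          · simp only [Fin.snoc_castSucc, Fin.snoc_last]
            exact Fin.castSucc_lt_last _
          · exact absurd hjk (lt_irrefl _)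
      · simp
    · intro t ht
      funext j
      rcases Fin.eq_castSucc_or_eq_last j with ⟨j', rfl⟩ | rfl
      · simp only [Fin.snoc_castSucc]; ext; rfl
      · simp only [Fin.snoc_last]
        simp only [Finset.mem_filter, Finset.mem_univ, true_and] at ht
        exact ht.2.symm
    · intro t ht; funext j; ext
      simp only [Fin.coe_castLT, Fin.snoc_castSucc, Fin.coe_castSucc]
    · intro t ht
      simp only [Finset.mem_filter, Finset.mem_univ, true_and] at ht
      have hv : ((t (Fin.last m) : ℕ)) = s := by
        have := congrArg Fin.val ht.2; simpa using this
      rw [Fin.prod_univ_castSucc, hv]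
      rfl

lemma hatS_split {N : ℕ} (s : ℕ) (a : ℕ → Fin N → ℝ) {m : ℕ}
    (I : Fin (m + 1) → Fin N) :
    hatS s a I = ∑ s' ∈ Finset.Icc 1 s,
      hatS (s' - 1) a (fun j => I j.castSucc) * a s' (I (Fin.last m)) := by
  induction s with
  | zero => simp [hatS_bot]
  | succ s ih =>
      rw [hatS_succ_top, ih, Finset.sum_Icc_succ_top (Nat.le_add_left 1 s)]
      simp

lemma hatS_snoc_split {N : ℕ} (s : ℕ) (a : ℕ → Fin N → ℝ) {m : ℕ}
    (J : Fin m → Fin N) (c : Fin N) :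
    hatS s a (Fin.snoc J c) = ∑ s' ∈ Finset.Icc 1 s, hatS (s' - 1) a J * a s' c := by
  rw [hatS_split]
  simp [Fin.snoc_castSucc, Fin.snoc_last]

lemma level_sum {N : ℕ} (a b : ℕ → Fin N → ℝ) (m s t : ℕ) :
    ∑ I : Fin (m + 1) → Fin N, hatS s a I * hatS t b I =
      ∑ s' ∈ Finset.Icc 1 s, ∑ t' ∈ Finset.Icc 1 t,
        (∑ I : Fin m → Fin N, hatS (s' - 1) a I * hatS (t' - 1) b I) *
          ∑ c, a s' c * b t' c := by
  classical
  rw [← Equiv.sum_comp (Fin.snocEquiv (fun _ => Fin N))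
      (fun I => hatS s a I * hatS t b I)]
  rw [Fintype.sum_prod_type]
  have lhs_eq : ∀ c : Fin N, ∀ J : Fin m → Fin N,
      hatS s a ((Fin.snocEquiv (fun _ => Fin N)) (c, J)) *
        hatS t b ((Fin.snocEquiv (fun _ => Fin N)) (c, J)) =
      ∑ s' ∈ Finset.Icc 1 s, ∑ t' ∈ Finset.Icc 1 t,
        (hatS (s' - 1) a J * hatS (t' - 1) b J) * (a s' c * b t' c) := by
    intro c J
    have ha := hatS_snoc_split s a J c
    have hb := hatS_snoc_split t b J c
    rw [show hatS s a ((Fin.snocEquiv (fun _ => Fin N)) (c, J)) = hatS s a (Fin.snoc J c)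
        from rfl,
      show hatS t b ((Fin.snocEquiv (fun _ => Fin N)) (c, J)) = hatS t b (Fin.snoc J c)
        from rfl]
    rw [ha, hb, Finset.sum_mul_sum]
    apply Finset.sum_congr rfl; intro s' _
    apply Finset.sum_congr rfl; intro t' _
    ring
  calc ∑ c : Fin N, ∑ J : Fin m → Fin N,
          hatS s a ((Fin.snocEquiv (fun _ => Fin N)) (c, J)) *
            hatS t b ((Fin.snocEquiv (fun _ => Fin N)) (c, J))
      = ∑ c : Fin N, ∑ J : Fin m → Fin N, ∑ s' ∈ Finset.Icc 1 s, ∑ t' ∈ Finset.Icc 1 t,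
          (hatS (s' - 1) a J * hatS (t' - 1) b J) * (a s' c * b t' c) := by
        exact Finset.sum_congr rfl fun c _ => Finset.sum_congr rfl fun J _ => lhs_eq c J
    _ = ∑ c : Fin N, ∑ s' ∈ Finset.Icc 1 s, ∑ J : Fin m → Fin N, ∑ t' ∈ Finset.Icc 1 t,
          (hatS (s' - 1) a J * hatS (t' - 1) b J) * (a s' c * b t' c) :=
        Finset.sum_congr rfl fun _ _ => Finset.sum_comm
    _ = ∑ s' ∈ Finset.Icc 1 s, ∑ c : Fin N, ∑ J : Fin m → Fin N, ∑ t' ∈ Finset.Icc 1 t,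
          (hatS (s' - 1) a J * hatS (t' - 1) b J) * (a s' c * b t' c) :=
        Finset.sum_comm
    _ = ∑ s' ∈ Finset.Icc 1 s, ∑ c : Fin N, ∑ t' ∈ Finset.Icc 1 t, ∑ J : Fin m → Fin N,
          (hatS (s' - 1) a J * hatS (t' - 1) b J) * (a s' c * b t' c) :=
        Finset.sum_congr rfl fun _ _ => Finset.sum_congr rfl fun _ _ => Finset.sum_comm
    _ = ∑ s' ∈ Finset.Icc 1 s, ∑ t' ∈ Finset.Icc 1 t, ∑ c : Fin N, ∑ J : Fin m → Fin N,
          (hatS (s' - 1) a J * hatS (t' - 1) b J) * (a s' c * b t' c) :=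
        Finset.sum_congr rfl fun _ _ => Finset.sum_comm
    _ = ∑ s' ∈ Finset.Icc 1 s, ∑ t' ∈ Finset.Icc 1 t,
          (∑ I : Fin m → Fin N, hatS (s' - 1) a I * hatS (t' - 1) b I) *
            ∑ c, a s' c * b t' c := by
        apply Finset.sum_congr rfl; intro s' _
        apply Finset.sum_congr rfl; intro t' _
        rw [Finset.sum_mul, Finset.sum_comm]
        apply Finset.sum_congr rfl; intro J _
        rw [Finset.mul_sum]

lemma Qhat_eq {N : ℕ} (a b : ℕ → Fin N → ℝ) (M : ℕ) : ∀ s t : ℕ,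
    Qhat a b M s t =
      ∑ m ∈ Finset.range (M + 1), ∑ I : Fin m → Fin N, hatS s a I * hatS t b I := by
  induction M with
  | zero => intro s t; simp [Qhat, hatS_empty]
  | succ M ih =>
      intro s t
      rw [Qhat, Finset.sum_range_succ']
      have h0 : (∑ I : Fin 0 → Fin N, hatS s a I * hatS t b I) = 1 := by
        simp [hatS_empty]
      rw [h0, add_comm]
      congr 1
      calc ∑ s' ∈ Finset.Icc 1 s, ∑ t' ∈ Finset.Icc 1 t,
              Qhat a b M (s' - 1) (t' - 1) * ∑ c, a s' c * b t' c
          = ∑ s' ∈ Finset.Icc 1 s, ∑ t' ∈ Finset.Icc 1 t, ∑ m ∈ Finset.range (M + 1),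
              (∑ I : Fin m → Fin N, hatS (s' - 1) a I * hatS (t' - 1) b I) *
                ∑ c, a s' c * b t' c := by
            apply Finset.sum_congr rfl; intro s' _
            apply Finset.sum_congr rfl; intro t' _
            rw [ih, Finset.sum_mul]
        _ = ∑ m ∈ Finset.range (M + 1), ∑ s' ∈ Finset.Icc 1 s, ∑ t' ∈ Finset.Icc 1 t,
              (∑ I : Fin m → Fin N, hatS (s' - 1) a I * hatS (t' - 1) b I) *
                ∑ c, a s' c * b t' c :=
            (Finset.sum_congr rfl fun _ _ => Finset.sum_comm).trans Finset.sum_comm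
        _ = ∑ m ∈ Finset.range (M + 1),
              ∑ I : Fin (m + 1) → Fin N, hatS s a I * hatS t b I := by
            apply Finset.sum_congr rfl; intro m _
            rw [level_sum]

/-- **Horner-type recursion computes the discrete signature kernel truncated at
level `M`**: `Q̂_M(T,T) = Σ_{m=0}^M Σ_{|I|=m} Ŝ^I(a) Ŝ^I(b)`. -/
theorem discrete_signature_kernel_horner (N T M : ℕ) (hM : 1 ≤ M)
    (a b : ℕ → Fin N → ℝ) :
    Qhat a b M T T =
      ∑ m ∈ Finset.range (M + 1), ∑ I : Fin m → Fin N, hatS T a I * hatS T b I :=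
  Qhat_eq a b M T T
end

section
/- Let N, T ∈ ℕ and v_1, …, v_T ∈ ℝ^N, and let f : [0,T] → ℝ^N be the piecewise-constant function with f(t) = v_r for t ∈ [r−1, r). Then for every multi-index I = (i_1,…,i_m), S^I_{[0,T]}(f) = Σ ∏_{r=1}^{T} ( v_r^{i_{j_{r-1}+1}} v_r^{i_{j_{r-1}+2}} ⋯ v_r^{i_{j_r}} / (j_r − j_{r-1})! ), where the sum is over all non-decreasing integer sequences 0 = j_0 ≤ j_1 ≤ ⋯ ≤ j_T = m, and v_r^{i} denotes the i-th coordinate of v_r. (The path signature of a discrete time series, interpreted as a concatenation of exponential paths with constant Lie-algebra derivatives v_1,…,v_T, equals the tensor product of tensor exponentials: S(γ̂) = exp_⊗(v_1) ⊗ ⋯ ⊗ exp_⊗(v_T).) -/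
open MeasureTheory

lemma simplex_zero (a b : ℝ) : simplex 0 a b = Set.univ :=
  Set.eq_univ_of_forall fun t => ⟨fun j => j.elim0, fun j => j.elim0⟩

lemma volume_simplex : ∀ (m : ℕ) (a b : ℝ), a ≤ b →
    volume (simplex m a b) = ENNReal.ofReal ((b - a) ^ m / m.factorial) := by
  intro m
  induction m with
  | zero =>
    intro a b _
    rw [simplex_zero]
    simp only [pow_zero, Nat.factorial_zero, Nat.cast_one, div_one, ENNReal.ofReal_one]
    rw [MeasureTheory.volume_pi, Measure.pi_univ]
    simp
  | succ k ih =>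
    intro a b hab
    set e := MeasurableEquiv.piFinSuccAbove (fun _ : Fin (k + 1) => ℝ) 0 with he
    have hmp : MeasurePreserving e volume
        ((volume : Measure ℝ).prod (Measure.pi fun _ : Fin k => volume)) := by
      convert measurePreserving_piFinSuccAbove (fun _ : Fin (k+1) => (volume : Measure ℝ)) 0
        using 2
      all_goals rfl
    set S : Set (ℝ × (Fin k → ℝ)) :=
      {z | z.1 ∈ Set.Icc a b ∧ z.2 ∈ simplex k z.1 b} with hS
    have hmemS : ∀ (x : ℝ) (y : Fin k → ℝ), ((x, y) ∈ S ↔ (x ∈ Set.Icc a b ∧ y ∈ simplex k x b)) :=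
      fun x y => Iff.rfl
    have hpre : e ⁻¹' S = simplex (k + 1) a b := by
      ext t
      have happ : e t = (t 0, fun j : Fin k => t ((0 : Fin (k+1)).succAbove j)) := rfl
      simp only [Set.mem_preimage, happ, hmemS, simplex, Set.mem_Icc, Set.mem_setOf_eq,
        Fin.succAbove_zero, Function.comp]
      constructor
      · rintro ⟨⟨h0a, h0b⟩, hcoord, hmono⟩
        refine ⟨fun j => ?_, fun p q hpq => ?_⟩
        · rcases Fin.eq_zero_or_eq_succ j with rfl | ⟨j', rfl⟩
          · exact ⟨h0a, h0b⟩
          · exact ⟨le_trans h0a (hcoord j').1, (hcoord j').2⟩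
        · rcases Fin.eq_zero_or_eq_succ p with rfl | ⟨p', rfl⟩
          · rcases Fin.eq_zero_or_eq_succ q with rfl | ⟨q', rfl⟩
            · exact le_refl _
            · exact (hcoord q').1
          · rcases Fin.eq_zero_or_eq_succ q with rfl | ⟨q', rfl⟩
            · exact absurd hpq (by simp [Fin.le_def])
            · exact hmono p' q' (by rwa [Fin.succ_le_succ_iff] at hpq)
      · rintro ⟨hcoord, hmono⟩
        refine ⟨hcoord 0, ⟨fun j => ⟨?_, (hcoord j.succ).2⟩, fun p q hpq => ?_⟩⟩
        · exact hmono 0 j.succ (Fin.zero_le _)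
        · exact hmono p.succ q.succ (by rwa [Fin.succ_le_succ_iff])
    have hSmeas : MeasurableSet S := by
      have : S = e.symm ⁻¹' (simplex (k+1) a b) := by
        rw [← hpre, ← Set.preimage_comp]
        simp
      rw [this]
      exact e.symm.measurable (measurableSet_simplex _ _ _)
    have hvol : volume (simplex (k+1) a b) =
        ((volume : Measure ℝ).prod (Measure.pi fun _ : Fin k => volume)) S := by
      rw [← hpre, ← hmp.measure_preimage hSmeas.nullMeasurableSet]
    rw [hvol, Measure.prod_apply hSmeas]
    have hcong : ∀ x : ℝ, (Measure.pi fun _ : Fin k => volume) (Prod.mk x ⁻¹' S) =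
        Set.indicator (Set.Icc a b) (fun x => ENNReal.ofReal ((b - x) ^ k / k.factorial)) x := by
      intro x
      by_cases hx : x ∈ Set.Icc a b
      · have : Prod.mk x ⁻¹' S = simplex k x b := by
          ext y
          simp only [Set.mem_preimage, hmemS, Set.mem_setOf_eq]
          exact ⟨fun h => h.2, fun h => ⟨hx, h⟩⟩
        rw [this, Set.indicator_of_mem hx, ← MeasureTheory.volume_pi, ih x b hx.2]
      · have : Prod.mk x ⁻¹' S = ∅ := by
          ext y
          simp only [Set.mem_preimage, hmemS, Set.mem_empty_iff_false, iff_false]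
          exact fun h => hx h.1
        rw [this, Set.indicator_of_notMem hx]; simp
    rw [lintegral_congr hcong, lintegral_indicator measurableSet_Icc]
    have hcont : ContinuousOn (fun x : ℝ => (b - x) ^ k / k.factorial) (Set.Icc a b) :=
      (((continuous_const.sub continuous_id).pow k).div_const _).continuousOn
    have hint : IntegrableOn (fun x : ℝ => (b - x) ^ k / k.factorial) (Set.Icc a b) :=
      hcont.integrableOn_compact isCompact_Icc
    rw [← ofReal_integral_eq_lintegral_ofReal hint]
    · congr 1
      rw [MeasureTheory.integral_Icc_eq_integral_Ioc, ← intervalIntegral.integral_of_le hab]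
      rw [intervalIntegral.integral_div]
      have : ∫ x in a..b, (b - x) ^ k = ∫ x in (b - b)..(b - a), x ^ k :=
        intervalIntegral.integral_comp_sub_left (fun x => x ^ k) b
      rw [this, sub_self, integral_pow]
      rw [Nat.factorial_succ]
      have hk : (k.factorial : ℝ) ≠ 0 := Nat.cast_ne_zero.2 k.factorial_ne_zero
      field_simp
      rw [zero_pow (Nat.succ_ne_zero k)]; push_cast; ring
    · refine (ae_restrict_iff' measurableSet_Icc).2 (Filter.Eventually.of_forall fun x hx => ?_)
      simp only [Pi.zero_apply]
      have h1 : (0:ℝ) ≤ b - x := by linarith [hx.2]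
      positivity


lemma volume_coord_eq_zero (m : ℕ) (j : Fin m) (c : ℝ) :
    volume {t : Fin m → ℝ | t j = c} = 0 := by
  have h : {t : Fin m → ℝ | t j = c} =
      Set.pi Set.univ (fun i => if i = j then {c} else Set.univ) := by
    ext t
    simp only [Set.mem_setOf_eq, Set.mem_pi, Set.mem_univ, forall_true_left]
    constructor
    · intro h i
      by_cases hi : i = j
      · subst hi; simp [h]
      · simp [hi]
    · intro h
      have := h j
      simpa using this
  rw [h, MeasureTheory.volume_pi, Measure.pi_pi]
  apply Finset.prod_eq_zero (Finset.mem_univ j)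
  simp [Real.volume_singleton]

lemma integral_piece (p q : ℕ) (a c b : ℝ) (g : Fin (p + q) → ℝ → ℝ) :
    (∫ t in {t : Fin (p + q) → ℝ |
        (fun i : Fin p => t (Fin.castAdd q i)) ∈ simplex p a c ∧
        (fun i : Fin q => t (Fin.natAdd p i)) ∈ simplex q c b}, ∏ j, g j (t j))
    = (∫ x in simplex p a c, ∏ i, g (Fin.castAdd q i) (x i)) *
      (∫ y in simplex q c b, ∏ i, g (Fin.natAdd p i) (y i)) := by
  set e : (Fin (p+q) → ℝ) ≃ᵐ (Fin p → ℝ) × (Fin q → ℝ) :=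
    (MeasurableEquiv.piCongrLeft (fun _ : Fin (p+q) => ℝ) finSumFinEquiv).symm.trans
      (MeasurableEquiv.sumPiEquivProdPi (fun _ => ℝ)) with he
  have hmp : MeasurePreserving e volume volume := by
    exact (volume_measurePreserving_sumPiEquivProdPi (fun _ : Fin p ⊕ Fin q => ℝ)).comp
      (volume_measurePreserving_piCongrLeft (fun _ : Fin (p+q) => ℝ) finSumFinEquiv).symm
  have hset : {t : Fin (p + q) → ℝ |
        (fun i : Fin p => t (Fin.castAdd q i)) ∈ simplex p a c ∧
        (fun i : Fin q => t (Fin.natAdd p i)) ∈ simplex q c b}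
      = e ⁻¹' ((simplex p a c) ×ˢ (simplex q c b)) := rfl
  have hfun : ∀ t : Fin (p+q) → ℝ, (∏ j, g j (t j)) =
      (∏ i, g (Fin.castAdd q i) ((e t).1 i)) * (∏ i, g (Fin.natAdd p i) ((e t).2 i)) := by
    intro t
    have h1 : ∀ i : Fin p, (e t).1 i = t (Fin.castAdd q i) := fun _ => rfl
    have h2 : ∀ i : Fin q, (e t).2 i = t (Fin.natAdd p i) := fun _ => rfl
    simp only [h1, h2]
    exact Fin.prod_univ_add fun j => g j (t j)
  rw [hset]
  rw [show (∫ t in e ⁻¹' ((simplex p a c) ×ˢ (simplex q c b)), ∏ j, g j (t j))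
      = ∫ t in e ⁻¹' ((simplex p a c) ×ˢ (simplex q c b)),
          (fun z : (Fin p → ℝ) × (Fin q → ℝ) =>
            (∏ i, g (Fin.castAdd q i) (z.1 i)) * (∏ i, g (Fin.natAdd p i) (z.2 i))) (e t)
      from setIntegral_congr_fun (e.measurable (((measurableSet_simplex _ _ _)).prod
        (measurableSet_simplex _ _ _))) (fun t _ => hfun t)]
  have h2 := hmp.setIntegral_preimage_emb e.measurableEmbedding
    (fun z : (Fin p → ℝ) × (Fin q → ℝ) =>
      (∏ i, g (Fin.castAdd q i) (z.1 i)) * (∏ i, g (Fin.natAdd p i) (z.2 i)))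
    ((simplex p a c) ×ˢ (simplex q c b))
  rw [h2, Measure.volume_eq_prod]
  exact setIntegral_prod_mul (fun x : Fin p → ℝ => ∏ i, g (Fin.castAdd q i) (x i))
    (fun y : Fin q → ℝ => ∏ i, g (Fin.natAdd p i) (y i)) _ _

lemma lowerset_iff {m : ℕ} (t : Fin m → ℝ) (c : ℝ)
    (hmono : ∀ j k : Fin m, j ≤ k → t j ≤ t k) (j : Fin m) :
    t j < c ↔ (j : ℕ) < (Finset.univ.filter (fun j : Fin m => t j < c)).card := by
  classical
  set S := Finset.univ.filter (fun j : Fin m => t j < c) with hSdef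
  constructor
  · intro hj
    have hsub : Finset.Iic j ⊆ S := fun j' hj' => by
      simp only [Finset.mem_Iic] at hj'
      simp only [hSdef, Finset.mem_filter, Finset.mem_univ, true_and]
      exact lt_of_le_of_lt (hmono j' j hj') hj
    have := Finset.card_le_card hsub
    rw [Fin.card_Iic] at this
    omega
  · intro hj
    by_contra hc
    have hsub : S ⊆ Finset.Iio j := fun j' hj' => by
      simp only [hSdef, Finset.mem_filter, Finset.mem_univ, true_and] at hj'
      simp only [Finset.mem_Iio]
      by_contra h
      push_neg at h
      exact hc (lt_of_le_of_lt (hmono j j' h) hj')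
    have := Finset.card_le_card hsub
    rw [Fin.card_Iio] at this
    omega

lemma integral_simplex_split (m : ℕ) (a c b : ℝ) (hac : a ≤ c) (hcb : c ≤ b)
    (g : Fin m → ℝ → ℝ)
    (hint : IntegrableOn (fun t => ∏ j, g j (t j)) (simplex m a b)) :
    (∫ t in simplex m a b, ∏ j, g j (t j))
      = ∑ p : Fin (m + 1),
          (∫ x in simplex (p : ℕ) a c,
              ∏ i : Fin (p : ℕ), g (Fin.castLE (Nat.lt_succ_iff.mp p.isLt) i) (x i)) *
          (∫ y in simplex (m - (p : ℕ)) c b,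
              ∏ i : Fin (m - (p : ℕ)), g ⟨(p : ℕ) + (i : ℕ), by omega⟩ (y i)) := by
  classical
  set B : ℕ → Set (Fin m → ℝ) := fun p =>
    {t | t ∈ simplex m a b ∧ ∀ j : Fin m, (t j < c ↔ (j : ℕ) < p)} with hB
  have hBsub : ∀ p, B p ⊆ simplex m a b := fun p t ht => ht.1
  have hBmeas : ∀ p : ℕ, MeasurableSet (B p) := by
    intro p
    have heq : B p = simplex m a b ∩ ⋂ j : Fin m,
        (if (j : ℕ) < p then {t : Fin m → ℝ | t j < c} else {t | c ≤ t j}) := by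
      ext t
      simp only [hB, Set.mem_inter_iff, Set.mem_iInter, Set.mem_setOf_eq]
      constructor
      · rintro ⟨h1, h2⟩
        refine ⟨h1, fun j => ?_⟩
        by_cases hj : (j : ℕ) < p
        · rw [if_pos hj]; exact (h2 j).mpr hj
        · rw [if_neg hj]; exact not_lt.mp (fun hlt => hj ((h2 j).mp hlt))
      · rintro ⟨h1, h2⟩
        refine ⟨h1, fun j => ?_⟩
        by_cases hj : (j : ℕ) < p
        · have := h2 j; rw [if_pos hj] at this; exact ⟨fun _ => hj, fun _ => this⟩
        · have := h2 j; rw [if_neg hj] at this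
          exact ⟨fun hlt => absurd hlt (not_lt.mpr this), fun h => absurd h hj⟩
    rw [heq]
    refine (measurableSet_simplex m a b).inter (MeasurableSet.iInter fun j => ?_)
    by_cases hj : (j : ℕ) < p
    · rw [if_pos hj]; exact measurableSet_lt (measurable_pi_apply j) measurable_const
    · rw [if_neg hj]; exact measurableSet_le measurable_const (measurable_pi_apply j)
  have hcover : simplex m a b = ⋃ p ∈ Finset.range (m + 1), B p := by
    apply Set.Subset.antisymm
    · intro t ht
      have hpm : (Finset.univ.filter (fun j : Fin m => t j < c)).card ≤ m := by
        refine le_trans (Finset.card_filter_le _ _) ?_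
        simp
      exact Set.mem_biUnion (Finset.mem_range.mpr (by omega))
        ⟨ht, fun j => lowerset_iff t c ht.2 j⟩
    · intro t ht
      simp only [Set.mem_iUnion] at ht
      obtain ⟨p, _, h⟩ := ht
      exact h.1
  have hdisj : (↑(Finset.range (m + 1)) : Set ℕ).Pairwise (Function.onFun Disjoint B) := by
    intro p hp q hq hpq
    simp only [Finset.coe_range, Set.mem_Iio] at hp hq
    have key : ∀ p' q' : ℕ, p' < m + 1 → q' < m + 1 → p' < q' → Disjoint (B p') (B q') := by
      intro p' q' hp' hq' hlt
      rw [Set.disjoint_left]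
      rintro t ⟨ht1, ht2⟩ ⟨ht1', ht2'⟩
      have hpm : p' < m := by omega
      have hc1 : ¬ (((⟨p', hpm⟩ : Fin m) : ℕ) < p') := by simp
      exact hc1 ((ht2 _).mp ((ht2' ⟨p', hpm⟩).mpr hlt))
    rcases hpq.lt_or_gt with h | h
    · exact key p q hp hq h
    · exact (key q p hq hp h).symm
  rw [hcover, integral_biUnion_finset (Finset.range (m + 1)) (fun p _ => hBmeas p) hdisj
    (fun p _ => hint.mono_set (hBsub p))]
  rw [← Fin.sum_univ_eq_sum_range (fun p => ∫ t in B p, ∏ j, g j (t j)) (m + 1)]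
  refine Finset.sum_congr rfl fun p _ => ?_
  -- per-piece computation
  set pn := (p : ℕ) with hpn
  have hp : pn ≤ m := Nat.lt_succ_iff.mp p.isLt
  set q := m - pn with hq
  have obl : pn + q = m := by omega
  set cA : Fin pn → Fin m := fun i => ⟨(i : ℕ), by omega⟩ with hcA
  set cB : Fin q → Fin m := fun i => ⟨pn + (i : ℕ), by omega⟩ with hcB
  set A' : Set (Fin m → ℝ) :=
    {t | (fun i : Fin pn => t (cA i)) ∈ simplex pn a c ∧
         (fun i : Fin q => t (cB i)) ∈ simplex q c b} with hA'
  -- B pn is a.e. equal to A'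
  have hsub1 : B pn ⊆ A' := by
    rintro t ⟨⟨hcoord, hmono⟩, hiff⟩
    constructor
    · refine ⟨fun i => ⟨(hcoord (cA i)).1, le_of_lt ((hiff (cA i)).mpr ?_)⟩,
        fun i k hik => hmono (cA i) (cA k) ?_⟩
      · exact i.isLt
      · exact hik
    · refine ⟨fun i => ⟨not_lt.mp fun h => ?_, (hcoord (cB i)).2⟩,
        fun i k hik => hmono (cB i) (cB k) ?_⟩
      · have h2 : pn + (i : ℕ) < pn := (hiff (cB i)).mp h
        omega
      · show pn + (i : ℕ) ≤ pn + (k : ℕ)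
        exact Nat.add_le_add_left hik pn
  have hsub2 : A' \ B pn ⊆ ⋃ j : Fin m, {t : Fin m → ℝ | t j = c} := by
    rintro t ⟨⟨hA1, hA2⟩, hnB⟩
    by_contra hne
    simp only [Set.mem_iUnion, Set.mem_setOf_eq, not_exists] at hne
    apply hnB
    have key : ∀ j : Fin m, ((j : ℕ) < pn → (a ≤ t j ∧ t j < c)) ∧
        ((pn ≤ (j : ℕ)) → (c < t j ∧ t j ≤ b)) := by
      intro j
      constructor
      · intro hj
        have h1 : t j ∈ Set.Icc a c := hA1.1 ⟨(j : ℕ), hj⟩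
        exact ⟨h1.1, lt_of_le_of_ne h1.2 (hne j)⟩
      · intro hj
        have hlt : (j : ℕ) - pn < q := by omega
        have hjB : cB ⟨(j : ℕ) - pn, hlt⟩ = j :=
          Fin.ext (by show pn + ((j : ℕ) - pn) = (j : ℕ); omega)
        have h1 : t (cB ⟨(j : ℕ) - pn, hlt⟩) ∈ Set.Icc c b := hA2.1 ⟨(j : ℕ) - pn, hlt⟩
        rw [hjB] at h1
        exact ⟨lt_of_le_of_ne h1.1 (Ne.symm (hne j)), h1.2⟩
    refine ⟨⟨fun j => ?_, fun j k hjk => ?_⟩, fun j => ?_⟩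
    · by_cases hj : (j : ℕ) < pn
      · obtain ⟨h1, h2⟩ := (key j).1 hj
        exact ⟨h1, le_trans (le_of_lt h2) hcb⟩
      · obtain ⟨h1, h2⟩ := (key j).2 (not_lt.mp hj)
        exact ⟨le_trans hac (le_of_lt h1), h2⟩
    · by_cases hj : (j : ℕ) < pn
      · by_cases hk : (k : ℕ) < pn
        · exact hA1.2 ⟨(j : ℕ), hj⟩ ⟨(k : ℕ), hk⟩ hjk
        · exact le_trans (le_of_lt ((key j).1 hj).2) (le_of_lt ((key k).2 (not_lt.mp hk)).1)
      · have hk : pn ≤ (k : ℕ) := le_trans (not_lt.mp hj) hjk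
        have hltj : (j : ℕ) - pn < q := by omega
        have hltk : (k : ℕ) - pn < q := by omega
        have hjk' : (j : ℕ) ≤ (k : ℕ) := hjk
        have h1 : t (cB ⟨(j : ℕ) - pn, hltj⟩) ≤ t (cB ⟨(k : ℕ) - pn, hltk⟩) :=
          hA2.2 ⟨(j : ℕ) - pn, hltj⟩ ⟨(k : ℕ) - pn, hltk⟩
            (show (j : ℕ) - pn ≤ (k : ℕ) - pn by omega)
        have hjB : cB ⟨(j : ℕ) - pn, hltj⟩ = j :=
          Fin.ext (by show pn + ((j : ℕ) - pn) = (j : ℕ); omega)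
        have hkB : cB ⟨(k : ℕ) - pn, hltk⟩ = k :=
          Fin.ext (by show pn + ((k : ℕ) - pn) = (k : ℕ); omega)
        rw [hjB, hkB] at h1
        exact h1
    · constructor
      · intro hlt
        by_contra hj
        exact absurd hlt (not_lt.mpr (le_of_lt ((key j).2 (not_lt.mp hj)).1))
      · exact fun hj => ((key j).1 hj).2
  have hae : B pn =ᵐ[volume] A' := by
    rw [MeasureTheory.ae_eq_set]
    constructor
    · rw [Set.diff_eq_empty.mpr hsub1]; exact measure_empty
    · exact measure_mono_null hsub2
        (measure_iUnion_null fun j => volume_coord_eq_zero m j c)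
  rw [show (∫ t in B pn, ∏ j, g j (t j)) = ∫ t in A', ∏ j, g j (t j)
    from setIntegral_congr_set hae]
  -- now change variables
  set d : (Fin m → ℝ) ≃ᵐ (Fin (pn + q) → ℝ) :=
    (MeasurableEquiv.piCongrLeft (fun _ : Fin m => ℝ) (finCongr obl)).symm with hd
  have hdmp : MeasurePreserving d volume volume :=
    (volume_measurePreserving_piCongrLeft (fun _ : Fin m => ℝ) (finCongr obl)).symm
  have hdapp : ∀ (t : Fin m → ℝ) (i : Fin (pn + q)), d t i = t (finCongr obl i) :=
    fun t i => Equiv.piCongrLeft_symm_apply _ _ t i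
  have hidx1 : ∀ i : Fin pn, finCongr obl (Fin.castAdd q i) = cA i := fun i => Fin.ext rfl
  have hidx2 : ∀ i : Fin q, finCongr obl (Fin.natAdd pn i) = cB i := fun i => Fin.ext rfl
  have hA'eq : A' = d ⁻¹' {s : Fin (pn + q) → ℝ |
      (fun i : Fin pn => s (Fin.castAdd q i)) ∈ simplex pn a c ∧
      (fun i : Fin q => s (Fin.natAdd pn i)) ∈ simplex q c b} := by
    ext t
    simp only [hA', Set.mem_preimage, Set.mem_setOf_eq, hdapp, hidx1, hidx2]
  have hGfun : ∀ t : Fin m → ℝ,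
      (∏ j, g j (t j)) = ∏ j : Fin (pn + q), g (finCongr obl j) (d t (j)) := by
    intro t
    refine (Fintype.prod_equiv (finCongr obl)
      (fun j => g (finCongr obl j) (d t j)) (fun j' => g j' (t j')) fun i => ?_).symm
    simp only [hdapp]
  have hSmeas : MeasurableSet {s : Fin (pn + q) → ℝ |
      (fun i : Fin pn => s (Fin.castAdd q i)) ∈ simplex pn a c ∧
      (fun i : Fin q => s (Fin.natAdd pn i)) ∈ simplex q c b} := by
    refine MeasurableSet.inter ?_ ?_
    · exact (measurable_pi_lambda (fun (s : Fin (pn+q) → ℝ) (i : Fin pn) => s (Fin.castAdd q i))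
        (fun i => measurable_pi_apply _)) (measurableSet_simplex pn a c)
    · exact (measurable_pi_lambda (fun (s : Fin (pn+q) → ℝ) (i : Fin q) => s (Fin.natAdd pn i))
        (fun i => measurable_pi_apply _)) (measurableSet_simplex q c b)
  rw [hA'eq]
  rw [setIntegral_congr_fun (d.measurable hSmeas)
    (fun t _ => hGfun t : ∀ t ∈ d ⁻¹' _, (∏ j, g j (t j)) = (fun s : Fin (pn + q) → ℝ =>
      ∏ j : Fin (pn + q), g (finCongr obl j) (s j)) (d t))]
  rw [hdmp.setIntegral_preimage_emb d.measurableEmbedding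
    (fun s : Fin (pn + q) → ℝ => ∏ j : Fin (pn + q), g (finCongr obl j) (s j)) _]
  rw [integral_piece pn q a c b (fun j => g (finCongr obl j))]
  simp only [hidx1, hidx2]
  rfl

lemma setIntegral_const_simplex (m : ℕ) (a b : ℝ) (hab : a ≤ b) (c : ℝ) :
    (∫ _ in simplex m a b, c) = ((b - a) ^ m / m.factorial) * c := by
  have h0 : (0:ℝ) ≤ b - a := by linarith
  rw [setIntegral_const, measureReal_def, volume_simplex m a b hab,
    ENNReal.toReal_ofReal (by positivity), smul_eq_mul]

lemma integral_simplex_ae_const (k : ℕ) (a : ℝ) (w : Fin k → ℝ → ℝ) (C : Fin k → ℝ)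
    (hw : ∀ i, ∀ x ∈ Set.Ico a (a + 1), w i x = C i) :
    (∫ y in simplex k a (a + 1), ∏ i, w i (y i)) = (∏ i, C i) / k.factorial := by
  have hnull : volume (⋃ i : Fin k, {y : Fin k → ℝ | y i = a + 1}) = 0 :=
    measure_iUnion_null fun i => volume_coord_eq_zero k i (a + 1)
  have hcong : (∫ y in simplex k a (a + 1), ∏ i, w i (y i))
      = ∫ _y in simplex k a (a + 1), ∏ i, C i := by
    refine setIntegral_congr_ae (measurableSet_simplex _ _ _) ?_
    have h2 : ∀ᵐ y : Fin k → ℝ, y ∉ ⋃ i : Fin k, {y : Fin k → ℝ | y i = a + 1} := by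
      rw [MeasureTheory.ae_iff]
      convert hnull using 2
      ext y
      simp
    filter_upwards [h2] with y hy hmem
    refine Finset.prod_congr rfl fun i _ => ?_
    have h3 : y i ∈ Set.Icc a (a + 1) := hmem.1 i
    have h4 : y i ≠ a + 1 := fun h => hy (Set.mem_iUnion.mpr ⟨i, h⟩)
    exact hw i (y i) ⟨h3.1, lt_of_le_of_ne h3.2 h4⟩
  rw [hcong, setIntegral_const_simplex k a (a + 1) (by linarith) _]
  have : a + 1 - a = 1 := by ring
  rw [this, one_pow]
  ring

lemma prod_attach_Ico (n' m' : ℕ) (f : ℕ → ℝ) :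
    (∏ p ∈ (Finset.Ico n' m').attach, f p.1) = ∏ i : Fin (m' - n'), f (n' + (i : ℕ)) := by
  rw [Finset.prod_attach (Finset.Ico n' m') (fun x => f x), Finset.prod_Ico_eq_prod_range,
    ← Fin.prod_univ_eq_prod_range]


open scoped Classical in
theorem sig_aux (N : ℕ) (v : ℕ → Fin N → ℝ) :
    ∀ (T m : ℕ) (I : Fin m → Fin N),
    (∫ t in simplex m 0 (T : ℝ), ∏ j, v (⌊t j⌋₊ + 1) (I j)) =
      ∑ j ∈ Finset.univ.filter (fun j : Fin (T + 1) → Fin (m + 1) =>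
          (∀ p q, p ≤ q → j p ≤ j q) ∧ j 0 = 0 ∧ j (Fin.last T) = Fin.last m),
        ∏ r : Fin T,
          (∏ p ∈ (Finset.Ico ((j r.castSucc : ℕ)) ((j r.succ : ℕ))).attach,
              v ((r : ℕ) + 1)
                (I ⟨p.1, by
                  have h1 := Finset.mem_Ico.mp p.2
                  have h2 := (j r.succ).isLt
                  exact Nat.lt_of_lt_of_le h1.2 (Nat.lt_succ_iff.mp h2)⟩)) /
            (Nat.factorial ((j r.succ : ℕ) - (j r.castSucc : ℕ)) : ℝ) := by
  intro T
  induction T with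
  | zero =>
    intro m I
    rcases Nat.eq_zero_or_pos m with rfl | hm
    · -- m = 0 : both sides are 1
      have hL : (∫ t in simplex 0 0 ((0:ℕ) : ℝ), ∏ j : Fin 0, v (⌊t j⌋₊ + 1) (I j)) = 1 := by
        rw [simplex_zero, Measure.restrict_univ]
        have huniv : (volume : Measure (Fin 0 → ℝ)) Set.univ = 1 := by
          rw [MeasureTheory.volume_pi, Measure.pi_univ]; simp
        simp [integral_const, measureReal_def, huniv]
      rw [hL]
      have hall : ∀ j : Fin 1 → Fin 1,
          ((∀ p q, p ≤ q → j p ≤ j q) ∧ j 0 = 0 ∧ j (Fin.last 0) = Fin.last 0) :=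
        fun j => ⟨fun p q _ => le_of_eq (Subsingleton.elim _ _),
          Subsingleton.elim _ _, Subsingleton.elim _ _⟩
      rw [Finset.filter_true_of_mem (fun j _ => hall j)]
      simp
    · -- m ≥ 1 : both sides are 0
      have hL : (∫ t in simplex m 0 ((0:ℕ) : ℝ), ∏ j, v (⌊t j⌋₊ + 1) (I j)) = 0 := by
        have hvol : volume (simplex m 0 ((0:ℕ) : ℝ)) = 0 := by
          rw [volume_simplex m _ _ (by norm_num)]
          simp [zero_pow (by omega : m ≠ 0)]
        rw [Measure.restrict_eq_zero.mpr hvol]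
        exact integral_zero_measure _
      rw [hL]
      have hemp : (Finset.univ.filter (fun j : Fin (0 + 1) → Fin (m + 1) =>
          (∀ p q, p ≤ q → j p ≤ j q) ∧ j 0 = 0 ∧ j (Fin.last 0) = Fin.last m)) = ∅ := by
        refine Finset.filter_eq_empty_iff.mpr ?_
        rintro j _ ⟨h1, h2, h3⟩
        have h0 : (Fin.last 0) = (0 : Fin 1) := rfl
        rw [h0, h2] at h3
        have := congrArg Fin.val h3
        simp only [Fin.val_zero, Fin.val_last] at this
        omega
      rw [hemp, Finset.sum_empty]
  | succ T ih =>
    intro m I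
    have hcast : (((T + 1 : ℕ)) : ℝ) = (T : ℝ) + 1 := by push_cast; ring
    rw [hcast]
    set g : Fin m → ℝ → ℝ := fun j x => v (⌊x⌋₊ + 1) (I j) with hg
    -- integrability
    have hTnn : (0:ℝ) ≤ (T : ℝ) := by positivity
    have hT1 : (0:ℝ) ≤ (T : ℝ) + 1 := by linarith
    have hmeas : Measurable (fun t : Fin m → ℝ => ∏ j, g j (t j)) := by
      refine Finset.measurable_prod Finset.univ fun j _ => ?_
      exact ((Measurable.of_discrete (f := fun n : ℕ => v (n + 1) (I j))).comp
        Nat.measurable_floor).comp (measurable_pi_apply j)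
    set C : ℝ := ∑ r ∈ Finset.range (T + 3), ∑ i, |v r i| + 1 with hC
    have hC0 : 0 ≤ C := by
      rw [hC]
      have : (0:ℝ) ≤ ∑ r ∈ Finset.range (T + 3), ∑ i, |v r i| :=
        Finset.sum_nonneg fun r _ => Finset.sum_nonneg fun i _ => abs_nonneg _
      linarith
    have hbound : ∀ (r : ℕ), r < T + 3 → ∀ i : Fin N, |v r i| ≤ C := by
      intro r hr i
      rw [hC]
      have h1 : |v r i| ≤ ∑ i, |v r i| :=
        Finset.single_le_sum (f := fun i => |v r i|) (fun i _ => abs_nonneg _)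
          (Finset.mem_univ i)
      have h2 : (∑ i, |v r i|) ≤ ∑ r ∈ Finset.range (T + 3), ∑ i, |v r i| :=
        Finset.single_le_sum (f := fun r => ∑ i, |v r i|)
          (fun r _ => Finset.sum_nonneg fun i _ => abs_nonneg _) (Finset.mem_range.mpr hr)
      linarith
    have hint : IntegrableOn (fun t => ∏ j, g j (t j)) (simplex m 0 ((T : ℝ) + 1)) := by
      have hfin : volume (simplex m 0 ((T : ℝ) + 1)) < ⊤ := by
        rw [volume_simplex _ _ _ hT1]
        exact ENNReal.ofReal_lt_top
      refine Integrable.mono' (g := fun _ => C ^ m)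
        ((integrableOn_const_iff (C := C ^ m)).mpr (Or.inr hfin))
        hmeas.aestronglyMeasurable ?_
      refine (ae_restrict_iff' (measurableSet_simplex _ _ _)).mpr
        (Filter.Eventually.of_forall fun t ht => ?_)
      rw [Real.norm_eq_abs, Finset.abs_prod]
      calc (∏ j, |g j (t j)|) ≤ ∏ _j : Fin m, C := by
            refine Finset.prod_le_prod (fun j _ => abs_nonneg _) (fun j _ => ?_)
            rw [hg]
            refine hbound _ ?_ _
            have h1 := (ht.1 j).1
            have h2 := (ht.1 j).2
            have : ⌊t j⌋₊ ≤ T + 1 := by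
              have := Nat.floor_le_floor (R := ℝ) h2
              rwa [show ⌊(T:ℝ)+1⌋₊ = T + 1 by
                rw [show ((T:ℝ)+1) = ((T+1 : ℕ) : ℝ) by push_cast; ring, Nat.floor_natCast]]
                at this
            omega
        _ = C ^ m := by rw [Finset.prod_const, Finset.card_univ, Fintype.card_fin]
        _ ≤ C ^ m := le_refl _
    have hsplit := integral_simplex_split m 0 (T : ℝ) ((T : ℝ) + 1) hTnn (by linarith) g hint
    rw [show (∫ t in simplex m 0 ((T:ℝ) + 1), ∏ j, v (⌊t j⌋₊ + 1) (I j))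
        = ∫ t in simplex m 0 ((T:ℝ) + 1), ∏ j, g j (t j) from rfl, hsplit]
    -- compute each summand, in "clean" form via the total function W
    classical
    set W : ℕ → ℕ → ℝ := fun r x => if hx : x < m then v r (I ⟨x, hx⟩) else 0 with hW
    have hstep : ∀ p : Fin (m + 1),
        (∫ x in simplex (p : ℕ) 0 (T : ℝ),
            ∏ i : Fin (p : ℕ), g (Fin.castLE (Nat.lt_succ_iff.mp p.isLt) i) (x i)) *
        (∫ y in simplex (m - (p : ℕ)) (T : ℝ) ((T : ℝ) + 1),
            ∏ i : Fin (m - (p : ℕ)), g ⟨(p : ℕ) + (i : ℕ), by omega⟩ (y i))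
        = (∑ j ∈ Finset.univ.filter (fun j : Fin (T + 1) → Fin ((p : ℕ) + 1) =>
              (∀ p' q', p' ≤ q' → j p' ≤ j q') ∧ j 0 = 0 ∧
                j (Fin.last T) = Fin.last (p : ℕ)),
            ∏ r : Fin T,
              (∏ x ∈ Finset.Ico ((j r.castSucc : ℕ)) ((j r.succ : ℕ)), W ((r : ℕ) + 1) x) /
                (Nat.factorial ((j r.succ : ℕ) - (j r.castSucc : ℕ)) : ℝ)) *
          ((∏ x ∈ Finset.Ico ((p : ℕ)) m, W (T + 1) x) /
            (Nat.factorial (m - (p : ℕ)) : ℝ)) := by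
      intro p
      have hpm : (p : ℕ) ≤ m := Nat.lt_succ_iff.mp p.isLt
      congr 1
      · -- first factor : induction hypothesis, then cleanup
        rw [ih (p : ℕ) (fun i => I (Fin.castLE hpm i))]
        refine Finset.sum_congr rfl fun j hj => ?_
        refine Finset.prod_congr rfl fun r _ => ?_
        congr 1
        refine Eq.trans ?_ (Finset.prod_attach (Finset.Ico _ _) (fun x => W ((r : ℕ) + 1) x))
        refine Finset.prod_congr rfl fun q _ => ?_
        have hq : (q : ℕ) < m := by
          have h1 := Finset.mem_Ico.mp q.2
          have h2 := (j r.succ).isLt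
          omega
        simp only [hW]
        rw [dif_pos hq]
        rfl
      · -- second factor : the block integral
        have hblk := integral_simplex_ae_const (m - (p : ℕ)) (T : ℝ)
          (fun i => g ⟨(p : ℕ) + (i : ℕ), by omega⟩)
          (fun i => v (T + 1) (I ⟨(p : ℕ) + (i : ℕ), by omega⟩)) ?_
        · rw [hblk]
          congr 1
          rw [Finset.prod_Ico_eq_prod_range, ← Fin.prod_univ_eq_prod_range]
          refine Finset.prod_congr rfl fun i _ => ?_
          have hi : (p : ℕ) + (i : ℕ) < m := by
            have := i.isLt
            omega
          simp only [hW]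
          rw [dif_pos hi]
        · intro i x hx
          have h1 : ⌊x⌋₊ = T := by
            rw [Nat.floor_eq_iff (le_trans hTnn hx.1)]
            push_cast
            exact ⟨hx.1, hx.2⟩
          show v (⌊x⌋₊ + 1) _ = _
          rw [h1]
    rw [Finset.sum_congr rfl (fun p _ => hstep p)]
    -- clean up the right-hand side
    have hcleansum : (∑ j ∈ Finset.univ.filter (fun j : Fin (T + 1 + 1) → Fin (m + 1) =>
          (∀ p q, p ≤ q → j p ≤ j q) ∧ j 0 = 0 ∧ j (Fin.last (T + 1)) = Fin.last m),
        ∏ r : Fin (T + 1),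
          (∏ p ∈ (Finset.Ico ((j r.castSucc : ℕ)) ((j r.succ : ℕ))).attach,
              v ((r : ℕ) + 1)
                (I ⟨p.1, by
                  have h1 := Finset.mem_Ico.mp p.2
                  have h2 := (j r.succ).isLt
                  exact Nat.lt_of_lt_of_le h1.2 (Nat.lt_succ_iff.mp h2)⟩)) /
            (Nat.factorial ((j r.succ : ℕ) - (j r.castSucc : ℕ)) : ℝ))
        = ∑ j ∈ Finset.univ.filter (fun j : Fin (T + 1 + 1) → Fin (m + 1) =>
          (∀ p q, p ≤ q → j p ≤ j q) ∧ j 0 = 0 ∧ j (Fin.last (T + 1)) = Fin.last m),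
        ∏ r : Fin (T + 1),
          (∏ x ∈ Finset.Ico ((j r.castSucc : ℕ)) ((j r.succ : ℕ)), W ((r : ℕ) + 1) x) /
            (Nat.factorial ((j r.succ : ℕ) - (j r.castSucc : ℕ)) : ℝ) := by
      refine Finset.sum_congr rfl fun j hj => ?_
      refine Finset.prod_congr rfl fun r _ => ?_
      congr 1
      refine Eq.trans ?_ (Finset.prod_attach (Finset.Ico _ _) (fun x => W ((r : ℕ) + 1) x))
      refine Finset.prod_congr rfl fun q _ => ?_
      have hq : (q : ℕ) < m := by
        have h1 := Finset.mem_Ico.mp q.2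
        have h2 := (j r.succ).isLt
        omega
      simp only [hW]
      rw [dif_pos hq]
    refine Eq.trans ?_ hcleansum.symm
    refine Eq.trans ?_ (Finset.sum_fiberwise_of_maps_to
      (g := fun j : Fin (T + 1 + 1) → Fin (m + 1) => j ((Fin.last T).castSucc))
      (t := (Finset.univ : Finset (Fin (m + 1)))) (fun j _ => Finset.mem_univ _) _)
    refine Finset.sum_congr rfl fun n _ => ?_
    have hn : (n : ℕ) ≤ m := Nat.lt_succ_iff.mp n.isLt
    rw [Finset.sum_mul]
    refine Finset.sum_nbij'
      (i := fun j' : Fin (T + 1) → Fin ((n : ℕ) + 1) =>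
        (Fin.snoc (fun q => Fin.castLE (by omega) (j' q)) (Fin.last m) :
          Fin (T + 1 + 1) → Fin (m + 1)))
      (j := fun j : Fin (T + 1 + 1) → Fin (m + 1) =>
        (fun q' => ⟨min ((j q'.castSucc : ℕ)) (n : ℕ), by omega⟩ :
          Fin (T + 1) → Fin ((n : ℕ) + 1)))
      ?_ ?_ ?_ ?_ ?_
    · -- i maps into target
      intro a ha
      simp only [Finset.mem_filter, Finset.mem_univ, true_and] at ha ⊢
      obtain ⟨ha1, ha2, ha3⟩ := ha
      refine ⟨⟨fun p q hpq => ?_, ?_, ?_⟩, ?_⟩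
      · cases q using Fin.lastCases with
        | last => rw [Fin.snoc_last]; exact Fin.le_last _
        | cast q0 =>
          cases p using Fin.lastCases with
          | last => exact absurd (lt_of_le_of_lt hpq (Fin.castSucc_lt_last q0)) (lt_irrefl _)
          | cast p0 =>
            rw [Fin.snoc_castSucc, Fin.snoc_castSucc]
            exact ha1 p0 q0 ((Fin.castSucc_le_castSucc_iff).mp hpq)
      · rw [show (0 : Fin (T + 1 + 1)) = (0 : Fin (T + 1)).castSucc from
          (Fin.castSucc_zero).symm, Fin.snoc_castSucc, ha2]
        exact Fin.ext rfl
      · rw [Fin.snoc_last]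
      · rw [Fin.snoc_castSucc, ha3]
        exact Fin.ext rfl
    · -- j maps into source
      intro a ha
      simp only [Finset.mem_filter, Finset.mem_univ, true_and] at ha ⊢
      obtain ⟨⟨ha1, ha2, ha3⟩, ha4⟩ := ha
      refine ⟨fun p q hpq => ?_, ?_, ?_⟩
      · show min ((a p.castSucc : ℕ)) (n : ℕ) ≤ min ((a q.castSucc : ℕ)) (n : ℕ)
        have h2 : (a p.castSucc : ℕ) ≤ (a q.castSucc : ℕ) :=
          ha1 p.castSucc q.castSucc ((Fin.castSucc_le_castSucc_iff).mpr hpq)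
        omega
      · refine Fin.ext ?_
        show min ((a (0 : Fin (T + 1)).castSucc : ℕ)) (n : ℕ) = 0
        rw [Fin.castSucc_zero, ha2]
        simp
      · refine Fin.ext ?_
        show min ((a ((Fin.last T).castSucc) : ℕ)) (n : ℕ) = (n : ℕ)
        rw [ha4]
        simp
    · -- left inverse
      intro a ha
      simp only [Finset.mem_filter, Finset.mem_univ, true_and] at ha
      funext q'
      refine Fin.ext ?_
      show min (((Fin.snoc (fun q => Fin.castLE (by omega) (a q)) (Fin.last m) :
          Fin (T + 1 + 1) → Fin (m + 1)) q'.castSucc : ℕ)) (n : ℕ) = (a q' : ℕ)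
      rw [Fin.snoc_castSucc]
      have := (a q').isLt
      simp only [Fin.coe_castLE]
      omega
    · -- right inverse
      intro a ha
      simp only [Finset.mem_filter, Finset.mem_univ, true_and] at ha
      obtain ⟨⟨ha1, ha2, ha3⟩, ha4⟩ := ha
      funext q
      show (Fin.snoc (fun q => Fin.castLE (by omega)
          ((fun q' : Fin (T + 1) => (⟨min ((a q'.castSucc : ℕ)) (n : ℕ), by omega⟩ :
            Fin ((n : ℕ) + 1))) q)) (Fin.last m) : Fin (T + 1 + 1) → Fin (m + 1)) q = a q
      cases q using Fin.lastCases with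
      | last => rw [Fin.snoc_last, ha3]
      | cast q0 =>
        rw [Fin.snoc_castSucc]
        refine Fin.ext ?_
        show min ((a q0.castSucc : ℕ)) (n : ℕ) = (a q0.castSucc : ℕ)
        have h1 : a q0.castSucc ≤ a ((Fin.last T).castSucc) :=
          ha1 _ _ ((Fin.castSucc_le_castSucc_iff).mpr (Fin.le_last q0))
        have h3 : (a q0.castSucc : ℕ) ≤ (a ((Fin.last T).castSucc) : ℕ) := h1
        have h4 := congrArg Fin.val ha4
        omega
    · -- terms agree
      intro a ha
      simp only [Finset.mem_filter, Finset.mem_univ, true_and] at ha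
      obtain ⟨ha1, ha2, ha3⟩ := ha
      rw [Fin.prod_univ_castSucc]
      congr 1
      · refine Finset.prod_congr rfl fun r _ => ?_
        simp only [Fin.succ_castSucc, Fin.snoc_castSucc, Fin.coe_castLE, Fin.coe_castSucc]
      · simp only [Fin.succ_last, Fin.snoc_last, Fin.snoc_castSucc, ha3, Fin.coe_castLE,
          Fin.val_last]

open scoped Classical in
/-- **Signature of a piecewise-constant derivative (discrete time series) as a
tensor product of tensor exponentials**: if `f : [0,T] → ℝ^N` equals `v_r` on
`[r−1, r)` for `r = 1,…,T`, then for any multi-index `I = (i_1,…,i_m)`,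
`S^I_{[0,T]}(f) = Σ_{0 = j_0 ≤ j_1 ≤ ⋯ ≤ j_T = m}
   ∏_{r=1}^T (v_r^{i_{j_{r-1}+1}} ⋯ v_r^{i_{j_r}} / (j_r − j_{r-1})!)`,
i.e. `S(γ̂) = exp_⊗(v_1) ⊗ ⋯ ⊗ exp_⊗(v_T)`. -/
theorem signature_piecewise_constant (N T : ℕ) (v : ℕ → Fin N → ℝ)
    (f : ℝ → Fin N → ℝ)
    (hf : ∀ r ∈ Finset.Icc 1 T, ∀ t ∈ Set.Ico ((r : ℝ) - 1) (r : ℝ), f t = v r)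
    (m : ℕ) (I : Fin m → Fin N) :
    (∫ t in simplex m 0 (T : ℝ), ∏ j, f (t j) (I j)) =
      ∑ j ∈ Finset.univ.filter (fun j : Fin (T + 1) → Fin (m + 1) =>
          (∀ p q, p ≤ q → j p ≤ j q) ∧ j 0 = 0 ∧ j (Fin.last T) = Fin.last m),
        ∏ r : Fin T,
          (∏ p ∈ (Finset.Ico ((j r.castSucc : ℕ)) ((j r.succ : ℕ))).attach,
              v ((r : ℕ) + 1)
                (I ⟨p.1, by
                  have h1 := Finset.mem_Ico.mp p.2
                  have h2 := (j r.succ).isLt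
                  omega⟩)) /
            (Nat.factorial ((j r.succ : ℕ) - (j r.castSucc : ℕ)) : ℝ) := by
  rw [show (∫ t in simplex m 0 (T : ℝ), ∏ j, f (t j) (I j))
      = ∫ t in simplex m 0 (T : ℝ), ∏ j, v (⌊t j⌋₊ + 1) (I j) from ?_]
  · exact sig_aux N v T m I
  · refine setIntegral_congr_ae (measurableSet_simplex _ _ _) ?_
    have hnull : volume (⋃ i : Fin m, {y : Fin m → ℝ | y i = (T : ℝ)}) = 0 :=
      measure_iUnion_null fun i => volume_coord_eq_zero m i (T : ℝ)
    have h2 : ∀ᵐ y : Fin m → ℝ, y ∉ ⋃ i : Fin m, {y : Fin m → ℝ | y i = (T : ℝ)} := by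
      rw [MeasureTheory.ae_iff]
      convert hnull using 2
      ext y
      simp
    filter_upwards [h2] with t ht hmem
    refine Finset.prod_congr rfl fun j _ => ?_
    have h3 : t j ∈ Set.Icc (0 : ℝ) (T : ℝ) := hmem.1 j
    have h4 : t j ≠ (T : ℝ) := fun h => ht (Set.mem_iUnion.mpr ⟨j, h⟩)
    have h5 : t j < (T : ℝ) := lt_of_le_of_ne h3.2 h4
    have h6 : ⌊t j⌋₊ < T := (Nat.floor_lt h3.1).mpr h5
    have h7 : f (t j) = v (⌊t j⌋₊ + 1) := by
      refine hf (⌊t j⌋₊ + 1) (Finset.mem_Icc.mpr ⟨by omega, by omega⟩) (t j) ⟨?_, ?_⟩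
      · push_cast
        have := Nat.floor_le h3.1
        linarith
      · push_cast
        exact Nat.lt_floor_add_one (t j)
    rw [h7]
end
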